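/- The bound γ_sp(G ⊙ v) ≤ γ_sp(G) + ⌊deg(v)/2⌋ − 1 is sharp: for the friendship graph F_n and v its center vertex of degree 2n, G ⊙ v is the star K_{1,2n}, and γ_sp(G ⊙ v) = 2n = γ_sp(F_n) + ⌊deg(v)/2⌋ − 1. -/

import Mathlib

/-- `S` is a super dominating set of `G`: it is dominating, and for every `u ∉ S`
there is `v ∈ S` whose neighbours outside `S` are exactly `{u}`. -/
def IsSuperDominatingSet {V : Type*} (G : SimpleGraph V) (S : Finset V) : Prop :=
  (∀ u ∉ S, ∃ v ∈ S, G.Adj v u) ∧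
  ∀ u ∉ S, ∃ v ∈ S, ∀ w, (G.Adj v w ∧ w ∉ S) ↔ w = u

/-- The super domination number of `G`. -/
noncomputable def superDominationNumber {V : Type*} [Fintype V] (G : SimpleGraph V) : ℕ :=
  sInf {n | ∃ S : Finset V, IsSuperDominatingSet G S ∧ S.card = n}

/-- `G ⊙ v`: the graph obtained from `G` by removing all edges between
any pair of neighbours of `v`. -/
def odot {V : Type*} (G : SimpleGraph V) (v : V) : SimpleGraph V where
  Adj a b := G.Adj a b ∧ ¬(G.Adj v a ∧ G.Adj v b)
  symm := ⟨fun a b ⟨h1, h2⟩ => ⟨h1.symm, fun ⟨p, q⟩ => h2 ⟨q, p⟩⟩⟩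
  loopless := ⟨fun a ⟨h, _⟩ => h.ne rfl⟩

/-- The star graph `K_{1,n}`: a center (`none`) adjacent to `n` leaves. -/
def starGraph (n : ℕ) : SimpleGraph (Option (Fin n)) :=
  SimpleGraph.fromRel (fun u _ => u = none)

/-- The friendship graph `F_n`: `n` triangles sharing the common center `none`. -/
def friendshipGraph (n : ℕ) : SimpleGraph (Option (Fin n × Fin 2)) :=
  SimpleGraph.fromRel (fun u w =>
    u = none ∨ ∃ p q : Fin n × Fin 2, u = some p ∧ w = some q ∧ p.1 = q.1)

/-! ### Auxiliary lemmas -/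

open Finset

lemma friend_adj (n : ℕ) (a b : Option (Fin n × Fin 2)) :
    (friendshipGraph n).Adj a b ↔
      a ≠ b ∧ (a = none ∨ b = none ∨
        ∃ p q : Fin n × Fin 2, a = some p ∧ b = some q ∧ p.1 = q.1) := by
  simp only [friendshipGraph, SimpleGraph.fromRel_adj]
  constructor
  · rintro ⟨hab, h | h⟩
    · rcases h with h | ⟨p, q, h1, h2, h3⟩
      · exact ⟨hab, Or.inl h⟩
      · exact ⟨hab, Or.inr (Or.inr ⟨p, q, h1, h2, h3⟩)⟩
    · rcases h with h | ⟨p, q, h1, h2, h3⟩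
      · exact ⟨hab, Or.inr (Or.inl h)⟩
      · exact ⟨hab, Or.inr (Or.inr ⟨q, p, h2, h1, h3.symm⟩)⟩
  · rintro ⟨hab, h⟩
    rcases h with h | h | ⟨p, q, h1, h2, h3⟩
    · exact ⟨hab, Or.inl (Or.inl h)⟩
    · exact ⟨hab, Or.inr (Or.inl h)⟩
    · exact ⟨hab, Or.inl (Or.inr ⟨p, q, h1, h2, h3⟩)⟩

lemma friend_adj_none_some (n : ℕ) (p : Fin n × Fin 2) :
    (friendshipGraph n).Adj none (some p) := by
  rw [friend_adj]
  exact ⟨by simp, Or.inl rfl⟩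

lemma friend_adj_some_some (n : ℕ) (p q : Fin n × Fin 2) :
    (friendshipGraph n).Adj (some p) (some q) ↔ p ≠ q ∧ p.1 = q.1 := by
  rw [friend_adj]
  constructor
  · rintro ⟨hab, h | h | ⟨p', q', h1, h2, h3⟩⟩
    · simp at h
    · simp at h
    · simp only [Option.some.injEq] at h1 h2
      subst h1; subst h2
      exact ⟨fun he => hab (by rw [he]), h3⟩
  · rintro ⟨hpq, h⟩
    exact ⟨by simpa using hpq, Or.inr (Or.inr ⟨p, q, rfl, rfl, h⟩)⟩

lemma friend_adj_none (n : ℕ) (x : Option (Fin n × Fin 2)) :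
    (friendshipGraph n).Adj none x ↔ x ≠ none := by
  cases x with
  | none => simp
  | some p => simp [friend_adj_none_some, (friend_adj_none_some n p).ne']

lemma odot_adj (n : ℕ) (a b : Option (Fin n × Fin 2)) :
    (odot (friendshipGraph n) none).Adj a b ↔
      (a = none ∧ b ≠ none) ∨ (a ≠ none ∧ b = none) := by
  show (friendshipGraph n).Adj a b ∧ _ ↔ _
  cases a with
  | none =>
    cases b with
    | none => simp
    | some q =>
      simp only [friend_adj_none, friend_adj_none_some]
      simp
  | some p =>
    cases b with
    | none =>
      simp only [friend_adj_none]
      have : (friendshipGraph n).Adj (some p) none := (friend_adj_none_some n p).symm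
      simp [this]
    | some q =>
      simp [friend_adj_none]

lemma sdn_eq {V : Type*} [Fintype V] (G : SimpleGraph V) (k : ℕ)
    (S : Finset V) (hS : IsSuperDominatingSet G S) (hcard : S.card = k)
    (hl : ∀ T : Finset V, IsSuperDominatingSet G T → k ≤ T.card) :
    superDominationNumber G = k := by
  apply le_antisymm
  · exact Nat.sInf_le ⟨S, hS, hcard⟩
  · have hne : {m | ∃ S : Finset V, IsSuperDominatingSet G S ∧ S.card = m}.Nonempty :=
      ⟨k, S, hS, hcard⟩
    apply le_csInf hne
    rintro m ⟨T, hT, rfl⟩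
    exact hl T hT

/-- Generic lower bound: a super dominating set covers at least half the vertices. -/
lemma sdom_lower {V : Type*} [Fintype V] [DecidableEq V] (G : SimpleGraph V)
    (S : Finset V) (h : IsSuperDominatingSet G S) :
    Fintype.card V ≤ 2 * S.card := by
  classical
  have key : ∀ u ∈ Sᶜ, ∃ v ∈ S, ∀ w, (G.Adj v w ∧ w ∉ S) ↔ w = u := by
    intro u hu
    exact h.2 u (Finset.mem_compl.mp hu)
  choose f hf1 hf2 using key
  set g : V → V := fun u => if hu : u ∈ Sᶜ then f u hu else u with hg
  have hmaps : ∀ u ∈ Sᶜ, g u ∈ S := by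
    intro u hu
    simp only [hg, dif_pos hu]
    exact hf1 u hu
  have hinj : Set.InjOn g ↑(Sᶜ) := by
    intro u₁ h₁ u₂ h₂ he
    rw [Finset.coe_compl] at h₁ h₂
    have h₁' : u₁ ∈ Sᶜ := by rwa [← Finset.coe_compl, Finset.mem_coe] at h₁
    have h₂' : u₂ ∈ Sᶜ := by rwa [← Finset.coe_compl, Finset.mem_coe] at h₂
    simp only [hg, dif_pos h₁', dif_pos h₂'] at he
    have a1 : G.Adj (f u₁ h₁') u₁ ∧ u₁ ∉ S := (hf2 u₁ h₁' u₁).mpr rfl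
    rw [he] at a1
    exact (hf2 u₂ h₂' u₁).mp a1
  have hle : Sᶜ.card ≤ S.card := Finset.card_le_card_of_injOn g hmaps hinj
  have := Finset.card_compl S (α := V)
  have := Finset.card_le_univ S
  omega

lemma fintype_card_opt (n : ℕ) :
    Fintype.card (Option (Fin n × Fin 2)) = 2 * n + 1 := by
  simp [Fintype.card_option, Fintype.card_prod]
  ring

/-! The super dominating set of the star `F_n ⊙ none`: all leaves. -/

lemma star_sdom (n : ℕ) (hn : 1 ≤ n) :
    superDominationNumber (odot (friendshipGraph n) none) = 2 * n := by
  classical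
  set G := odot (friendshipGraph n) none with hG
  set S : Finset (Option (Fin n × Fin 2)) := Finset.univ.erase none with hSdef
  have hmem : ∀ u, u ∈ S ↔ u ≠ none := by
    intro u; simp [hSdef]
  have hScard : S.card = 2 * n := by
    rw [hSdef, Finset.card_erase_of_mem (Finset.mem_univ _), Finset.card_univ,
      fintype_card_opt]
    omega
  have i0 : Fin n := ⟨0, hn⟩
  have hv : (some (i0, (0 : Fin 2)) : Option (Fin n × Fin 2)) ∈ S := by
    rw [hmem]; simp
  have hSsd : IsSuperDominatingSet G S := by
    constructor
    · intro u hu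
      rw [hmem, not_not] at hu
      subst hu
      refine ⟨some (i0, 0), hv, ?_⟩
      rw [hG, odot_adj]
      simp
    · intro u hu
      rw [hmem, not_not] at hu
      subst hu
      refine ⟨some (i0, 0), hv, ?_⟩
      intro w
      constructor
      · rintro ⟨_, hw⟩
        rw [hmem, not_not] at hw
        exact hw
      · rintro rfl
        refine ⟨?_, by rw [hmem]; simp⟩
        rw [hG, odot_adj]
        simp
  apply sdn_eq G (2 * n) S hSsd hScard
  intro T hT
  -- lower bound: complement of T has at most one element
  have hcompl : Tᶜ.card ≤ 1 := by
    rw [Finset.card_le_one]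
    intro a ha b hb
    rw [Finset.mem_compl] at ha hb
    by_contra hne
    -- none must be in T if some leaf is outside T
    have hnone : ∀ p : Fin n × Fin 2, some p ∉ T → (none : Option (Fin n × Fin 2)) ∈ T := by
      intro p hp
      obtain ⟨v, hvT, hv⟩ := hT.1 (some p) hp
      rw [hG, odot_adj] at hv
      rcases hv with ⟨rfl, _⟩ | ⟨_, h⟩
      · exact hvT
      · simp at h
    -- super condition forces all leaves but one inside T
    have hsup : ∀ p : Fin n × Fin 2, some p ∉ T →
        ∀ w, w ≠ none → w ∉ T → w = some p := by
      intro p hp w hw hwT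
      obtain ⟨v, hvT, hv⟩ := hT.2 (some p) hp
      have hadj : G.Adj v (some p) ∧ some p ∉ T := (hv (some p)).mpr rfl
      have hvnone : v = none := by
        rcases (by rw [hG, odot_adj] at hadj; exact hadj.1) with ⟨h, _⟩ | ⟨_, h⟩
        · exact h
        · simp at h
      subst hvnone
      apply (hv w).mp
      refine ⟨?_, hwT⟩
      rw [hG, odot_adj]
      exact Or.inl ⟨rfl, hw⟩
    -- case analysis on a, b
    cases a with
    | none =>
      cases b with
      | none => exact hne rfl
      | some q => exact ha (hnone q hb)
    | some p =>
      cases b with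
      | none => exact hb (hnone p ha)
      | some q =>
        have := hsup p ha (some q) (by simp) hb
        exact hne this.symm
  have h1 := Finset.card_compl T (α := Option (Fin n × Fin 2))
  have h2 := Finset.card_le_univ T
  rw [fintype_card_opt] at h1
  rw [fintype_card_opt] at h2
  omega

/-! Super domination number of the friendship graph. -/

lemma friend_sdom (n : ℕ) (hn : 1 ≤ n) :
    superDominationNumber (friendshipGraph n) = n + 1 := by
  classical
  set S : Finset (Option (Fin n × Fin 2)) :=
    insert none (Finset.univ.image (fun i : Fin n => some (i, (0 : Fin 2)))) with hSdef
  have hmem : ∀ u, u ∈ S ↔ u = none ∨ ∃ i : Fin n, u = some (i, 0) := by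
    intro u
    simp [hSdef, eq_comm]
  have hScard : S.card = n + 1 := by
    rw [hSdef, Finset.card_insert_of_notMem (by simp),
      Finset.card_image_of_injective _ (by intro a b h; simpa using h)]
    simp
  have hSsd : IsSuperDominatingSet (friendshipGraph n) S := by
    constructor
    · intro u hu
      refine ⟨none, by rw [hmem]; exact Or.inl rfl, ?_⟩
      rw [friend_adj_none]
      intro h
      exact hu (by rw [hmem]; exact Or.inl h)
    · intro u hu
      rw [hmem] at hu
      push_neg at hu
      obtain ⟨hu1, hu2⟩ := hu
      obtain ⟨p, rfl⟩ := Option.ne_none_iff_exists'.mp hu1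
      have hp2 : p.2 = 1 := by
        have : p.2 ≠ 0 := by
          intro h
          exact hu2 p.1 (by rw [← h])
        omega
      refine ⟨some (p.1, 0), by rw [hmem]; exact Or.inr ⟨p.1, rfl⟩, ?_⟩
      intro w
      constructor
      · rintro ⟨hadj, hw⟩
        rw [hmem] at hw
        push_neg at hw
        obtain ⟨hw1, hw2⟩ := hw
        obtain ⟨q, rfl⟩ := Option.ne_none_iff_exists'.mp hw1
        rw [friend_adj_some_some] at hadj
        have hq1 : q.1 = p.1 := hadj.2.symm
        have hq2 : q.2 = 1 := by
          have : q.2 ≠ 0 := by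
            intro h
            exact hw2 q.1 (by rw [← h])
          omega
        congr 1
        exact Prod.ext hq1 (by rw [hq2, hp2])
      · rintro rfl
        constructor
        · rw [friend_adj_some_some]
          refine ⟨?_, rfl⟩
          intro h
          have := congrArg Prod.snd h
          simp [hp2] at this
        · rw [hmem]
          push_neg
          refine ⟨by simp, ?_⟩
          intro i h
          have := congrArg Prod.snd (Option.some_injective _ h)
          simp [hp2] at this
  apply sdn_eq _ (n + 1) S hSsd hScard
  intro T hT
  have := sdom_lower (friendshipGraph n) T hT
  rw [fintype_card_opt] at this
  omega

lemma friend_nbhd (n : ℕ) :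
    ((friendshipGraph n).neighborSet none).ncard = 2 * n := by
  classical
  have hset : (friendshipGraph n).neighborSet none = {(none : Option (Fin n × Fin 2))}ᶜ := by
    ext x
    simp [SimpleGraph.neighborSet, friend_adj_none]
  rw [hset, Set.ncard_eq_toFinset_card']
  simp only [Set.toFinset_compl, Set.toFinset_singleton]
  rw [Finset.card_compl, Finset.card_singleton, fintype_card_opt]
  omega

/-- The graph isomorphism between `F_n ⊙ none` and `K_{1,2n}`. -/
lemma odot_iso (n : ℕ) :
    Nonempty (odot (friendshipGraph n) none ≃g starGraph (2 * n)) := by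
  classical
  have e : Fin n × Fin 2 ≃ Fin (2 * n) :=
    (finProdFinEquiv : Fin n × Fin 2 ≃ Fin (n * 2)).trans (finCongr (by ring))
  refine ⟨⟨Equiv.optionCongr e, ?_⟩⟩
  intro a b
  rw [odot_adj]
  show (starGraph (2 * n)).Adj (Option.map e a) (Option.map e b) ↔ _
  simp only [starGraph, SimpleGraph.fromRel_adj]
  cases a with
  | none =>
    cases b with
    | none => simp
    | some q => simp
  | some p =>
    cases b with
    | none => simp
    | some q =>
      simp only [Option.map_some]
      constructor
      · rintro ⟨_, h | h⟩ <;> simp at h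
      · rintro (⟨h, _⟩ | ⟨_, h⟩) <;> simp at h

/-- sharpness of the bound of Theorem `Godotv`: for the friendship graph
`F_n` with center `v` (of degree `2n`), `F_n ⊙ v` is the star `K_{1,2n}` and
`γ_sp(F_n ⊙ v) = 2n = γ_sp(F_n) + ⌊deg(v)/2⌋ - 1`. -/
theorem stmt_9 (n : ℕ) (hn : 1 ≤ n) :
    ((friendshipGraph n).neighborSet none).ncard = 2 * n ∧
    Nonempty (odot (friendshipGraph n) none ≃g starGraph (2 * n)) ∧
    superDominationNumber (odot (friendshipGraph n) none) = 2 * n ∧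
    2 * n = superDominationNumber (friendshipGraph n) +
      ((friendshipGraph n).neighborSet none).ncard / 2 - 1 := by
  refine ⟨friend_nbhd n, odot_iso n, star_sdom n hn, ?_⟩
  rw [friend_nbhd n, friend_sdom n hn]
  omega
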